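/- Let A ⊆ ℤ/Nℤ (N prime) be progression-free with |A| > √(2N), and let δ = |A|/N. Then ∑_{r ≠ 0} |Â(r)|³ ≥ |A|³/2. -/

import Mathlib

open Finset

/-- The Fourier coefficient `Â(r) = ∑_{x ∈ A} e^{-2πixr/N}` of the indicator of `A ⊆ ℤ/Nℤ`. -/
noncomputable def dft {N : ℕ} (A : Finset (ZMod N)) (r : ZMod N) : ℂ :=
  ∑ x ∈ A, Complex.exp (-(2 * Real.pi * Complex.I * ((x * r).val : ℕ) / N))

namespace StmtAux

noncomputable def ζ (N : ℕ) : ℂ := Complex.exp (-(2 * Real.pi * Complex.I / N))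

noncomputable def e {N : ℕ} (a : ZMod N) : ℂ := ζ N ^ a.val

lemma dft_eq {N : ℕ} (A : Finset (ZMod N)) (r : ZMod N) :
    dft A r = ∑ x ∈ A, e (x * r) := by
  refine Finset.sum_congr rfl fun x _ => ?_
  rw [e, ζ, ← Complex.exp_nat_mul]
  congr 1
  ring

lemma ζ_pow_N {N : ℕ} [NeZero N] : ζ N ^ N = 1 := by
  rw [ζ, ← Complex.exp_nat_mul]
  have hN : (N : ℂ) ≠ 0 := Nat.cast_ne_zero.mpr (NeZero.ne N)
  rw [show (N : ℂ) * (-(2 * Real.pi * Complex.I / N)) =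
      ((-1 : ℤ) : ℂ) * (2 * Real.pi * Complex.I) by field_simp; ring]
  exact Complex.exp_int_mul_two_pi_mul_I (-1)

lemma ζ_pow_mod {N : ℕ} [NeZero N] (m : ℕ) : ζ N ^ m = ζ N ^ (m % N) := by
  conv_lhs => rw [← Nat.div_add_mod m N]
  rw [pow_add, pow_mul, ζ_pow_N, one_pow, one_mul]

lemma e_add {N : ℕ} [NeZero N] (a b : ZMod N) : e (a + b) = e a * e b := by
  rw [e, e, e, ← pow_add, ζ_pow_mod (a.val + b.val), ZMod.val_add,
    ← ζ_pow_mod]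

lemma e_zero {N : ℕ} [NeZero N] : e (0 : ZMod N) = 1 := by
  rw [e, ZMod.val_zero, pow_zero]

lemma ζ_ne_one {N : ℕ} (hN : 1 < N) : ζ N ≠ 1 := by
  intro hone
  rw [ζ, Complex.exp_eq_one_iff] at hone
  obtain ⟨n, hn⟩ := hone
  have h2 : (2 * (Real.pi : ℂ) * Complex.I) ≠ 0 := by
    simp [Real.pi_ne_zero, Complex.I_ne_zero]
  have hNc : (N : ℂ) ≠ 0 := Nat.cast_ne_zero.mpr (by omega)
  field_simp at hn
  have h3 : ((n * N + 1 : ℤ) : ℂ) * (2 * Real.pi * Complex.I) = 0 := by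
    push_cast
    linear_combination (-(2 * (Real.pi : ℂ) * Complex.I)) * hn
  have h4 : ((n * N + 1 : ℤ) : ℂ) = 0 := by
    rcases mul_eq_zero.mp h3 with h | h
    · exact h
    · exact absurd h h2
  have h5 : n * (N : ℤ) + 1 = 0 := by exact_mod_cast h4
  have hNZ : (1 : ℤ) < N := by exact_mod_cast hN
  rcases le_or_gt 0 n with h | h
  · nlinarith
  · nlinarith

lemma sum_e {N : ℕ} [NeZero N] (hN : 1 < N) : ∑ s : ZMod N, e s = 0 := by
  have h1 : ∑ s : ZMod N, e s = ∑ k ∈ Finset.range N, ζ N ^ k := by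
    refine Finset.sum_nbij' (fun s => s.val) (fun k => (k : ZMod N)) ?_ ?_ ?_ ?_ ?_
    · intro a _; exact Finset.mem_range.mpr (ZMod.val_lt a)
    · intro b _; exact Finset.mem_univ _
    · intro a _; exact ZMod.natCast_zmod_val a
    · intro b hb; exact ZMod.val_natCast_of_lt (Finset.mem_range.mp hb)
    · intro a _; rfl
  rw [h1, geom_sum_eq (ζ_ne_one hN), ζ_pow_N, sub_self, zero_div]

lemma orth {N : ℕ} [NeZero N] (hN : N.Prime) (a : ZMod N) :
    ∑ r : ZMod N, e (a * r) = if a = 0 then (N : ℂ) else 0 := by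
  haveI := Fact.mk hN
  split_ifs with h
  · subst h
    simp only [zero_mul, e_zero]
    simp [ZMod.card]
  · rw [Fintype.sum_equiv (Equiv.mulLeft₀ a h) (fun r => e (a * r)) e (fun r => rfl)]
    exact sum_e hN.one_lt

lemma key_identity {N : ℕ} [NeZero N] (hN : N.Prime) (A : Finset (ZMod N))
    (hA : ∀ x ∈ A, ∀ y ∈ A, ∀ z ∈ A, x + y = 2 * z → x = y ∧ y = z) :
    ∑ r : ZMod N, (dft A r) ^ 2 * dft A ((-2) * r) = (N : ℂ) * A.card := by
  have expand : ∀ r : ZMod N, (dft A r) ^ 2 * dft A ((-2) * r)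
      = ∑ x ∈ A, ∑ y ∈ A, ∑ z ∈ A, e ((x + y + (-2) * z) * r) := by
    intro r
    rw [dft_eq, dft_eq, sq, Finset.sum_mul_sum, Finset.sum_mul]
    refine Finset.sum_congr rfl fun x _ => ?_
    rw [Finset.sum_mul]
    refine Finset.sum_congr rfl fun y _ => ?_
    rw [Finset.mul_sum]
    refine Finset.sum_congr rfl fun z _ => ?_
    rw [show (x + y + (-2) * z) * r = x * r + (y * r + z * ((-2) * r)) by ring,
      e_add, e_add, mul_assoc]
  calc ∑ r : ZMod N, (dft A r) ^ 2 * dft A ((-2) * r)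
      = ∑ r : ZMod N, ∑ x ∈ A, ∑ y ∈ A, ∑ z ∈ A, e ((x + y + (-2) * z) * r) := by
        exact Finset.sum_congr rfl fun r _ => expand r
    _ = ∑ x ∈ A, ∑ y ∈ A, ∑ z ∈ A, ∑ r : ZMod N, e ((x + y + (-2) * z) * r) := by
        rw [Finset.sum_comm]
        refine Finset.sum_congr rfl fun x _ => ?_
        rw [Finset.sum_comm]
        refine Finset.sum_congr rfl fun y _ => ?_
        rw [Finset.sum_comm]
    _ = ∑ x ∈ A, ∑ y ∈ A, ∑ z ∈ A,
          (if x + y + (-2) * z = 0 then (N : ℂ) else 0) := by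
        refine Finset.sum_congr rfl fun x _ => Finset.sum_congr rfl fun y _ =>
          Finset.sum_congr rfl fun z _ => orth hN _
    _ = ∑ _x ∈ A, (N : ℂ) := by
        refine Finset.sum_congr rfl fun x hx => ?_
        rw [Finset.sum_eq_single x]
        · rw [Finset.sum_eq_single x]
          · rw [if_pos (by ring)]
          · intro z hz hzx
            have hne : x + x + (-2) * z ≠ 0 := fun h =>
              hzx ((hA x hx x hx z hz (by linear_combination h)).2.symm)
            rw [if_neg hne]
          · intro h; exact absurd hx h
        · intro y hy hyx
          refine Finset.sum_eq_zero fun z hz => ?_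
          have hne : x + y + (-2) * z ≠ 0 := fun h =>
            hyx ((hA x hx y hy z hz (by linear_combination h)).1.symm)
          rw [if_neg hne]
        · intro h; exact absurd hx h
    _ = (N : ℂ) * A.card := by
        rw [Finset.sum_const, nsmul_eq_mul, mul_comm]

lemma dft_zero {N : ℕ} [NeZero N] (A : Finset (ZMod N)) :
    dft A 0 = (A.card : ℂ) := by
  rw [dft_eq]
  simp [e_zero]

end StmtAux

theorem stmt1 {N : ℕ} [NeZero N] (hN : N.Prime) (A : Finset (ZMod N))
    (hA : ∀ x ∈ A, ∀ y ∈ A, ∀ z ∈ A, x + y = 2 * z → x = y ∧ y = z)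
    (hbig : Real.sqrt (2 * N) < A.card) :
    (A.card : ℝ) ^ 3 / 2 ≤ ∑ r ∈ Finset.univ.filter (fun r : ZMod N => r ≠ 0), ‖dft A r‖ ^ 3 := by
  haveI := Fact.mk hN
  set c : ℝ := (A.card : ℝ) with hc
  have hc0 : 0 < c := lt_of_le_of_lt (Real.sqrt_nonneg _) hbig
  have h2N : 2 * (N : ℝ) < c ^ 2 := (Real.sqrt_lt' hc0).mp hbig
  have hcN : c ≤ (N : ℝ) := by
    rw [hc]
    exact_mod_cast (Finset.card_le_univ A).trans_eq (by simp [ZMod.card])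
  have hN2 : 2 < N := by
    have : 2 * (N : ℝ) < (N : ℝ) ^ 2 := lt_of_lt_of_le h2N (by nlinarith)
    have hNpos : (0 : ℝ) < N := by exact_mod_cast hN.pos
    have : (2 : ℝ) < N := by nlinarith
    exact_mod_cast this
  have h2z : (2 : ZMod N) ≠ 0 := by
    have : ((2 : ℕ) : ZMod N) ≠ 0 := by
      rw [Ne, ZMod.natCast_eq_zero_iff]
      intro h
      have := Nat.le_of_dvd (by norm_num) h
      omega
    simpa using this
  have hm2 : ((-2 : ZMod N)) ≠ 0 := by
    simpa using neg_ne_zero.mpr h2z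
  set T : Finset (ZMod N) := Finset.univ.filter (fun r : ZMod N => r ≠ 0) with hT
  -- the complex sum over nonzero frequencies
  have hS : ∑ r ∈ T, (dft A r) ^ 2 * dft A ((-2) * r)
      = (N : ℂ) * A.card - (A.card : ℂ) ^ 3 := by
    rw [hT, Finset.filter_ne', Finset.sum_erase_eq_sub (Finset.mem_univ 0),
      StmtAux.key_identity hN A hA]
    congr 1
    rw [show ((-2 : ZMod N)) * 0 = 0 by ring, StmtAux.dft_zero]
    ring
  have hnorm : c ^ 3 - (N : ℝ) * c ≤ ∑ r ∈ T, ‖dft A r‖ ^ 2 * ‖dft A ((-2) * r)‖ := by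
    have h1 : ‖∑ r ∈ T, (dft A r) ^ 2 * dft A ((-2) * r)‖ = c ^ 3 - (N : ℝ) * c := by
      rw [hS, show (N : ℂ) * A.card - (A.card : ℂ) ^ 3
          = (((N : ℝ) * c - c ^ 3 : ℝ) : ℂ) by push_cast [hc]; ring,
        Complex.norm_real, Real.norm_eq_abs, abs_of_nonpos (by nlinarith)]
      ring
    calc c ^ 3 - (N : ℝ) * c = ‖∑ r ∈ T, (dft A r) ^ 2 * dft A ((-2) * r)‖ := h1.symm
      _ ≤ ∑ r ∈ T, ‖(dft A r) ^ 2 * dft A ((-2) * r)‖ := norm_sum_le _ _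
      _ = ∑ r ∈ T, ‖dft A r‖ ^ 2 * ‖dft A ((-2) * r)‖ := by
          refine Finset.sum_congr rfl fun r _ => ?_
          rw [norm_mul, norm_pow]
  have hbij : ∑ r ∈ T, ‖dft A ((-2) * r)‖ ^ 3 = ∑ r ∈ T, ‖dft A r‖ ^ 3 := by
    refine Finset.sum_nbij' (fun r => (-2) * r) (fun s => (-2 : ZMod N)⁻¹ * s) ?_ ?_ ?_ ?_ ?_
    · intro r hr
      simp only [hT, Finset.mem_filter, Finset.mem_univ, true_and] at hr ⊢
      exact mul_ne_zero hm2 hr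
    · intro s hs
      simp only [hT, Finset.mem_filter, Finset.mem_univ, true_and] at hs ⊢
      exact mul_ne_zero (inv_ne_zero hm2) hs
    · intro r _; show (-2 : ZMod N)⁻¹ * ((-2) * r) = r
      rw [← mul_assoc, inv_mul_cancel₀ hm2, one_mul]
    · intro s _; show (-2 : ZMod N) * ((-2 : ZMod N)⁻¹ * s) = s
      rw [← mul_assoc, mul_inv_cancel₀ hm2, one_mul]
    · intro r _; rfl
  have hAM : ∀ r : ZMod N, ‖dft A r‖ ^ 2 * ‖dft A ((-2) * r)‖
      ≤ (2 * ‖dft A r‖ ^ 3 + ‖dft A ((-2) * r)‖ ^ 3) / 3 := by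
    intro r
    set a := ‖dft A r‖ with ha
    set b := ‖dft A ((-2) * r)‖ with hb
    have ha0 : 0 ≤ a := norm_nonneg _
    have hb0 : 0 ≤ b := norm_nonneg _
    nlinarith [mul_nonneg (sq_nonneg (a - b)) (by positivity : (0:ℝ) ≤ 2 * a + b)]
  have hsum : ∑ r ∈ T, ‖dft A r‖ ^ 2 * ‖dft A ((-2) * r)‖ ≤ ∑ r ∈ T, ‖dft A r‖ ^ 3 := by
    calc ∑ r ∈ T, ‖dft A r‖ ^ 2 * ‖dft A ((-2) * r)‖
        ≤ ∑ r ∈ T, (2 * ‖dft A r‖ ^ 3 + ‖dft A ((-2) * r)‖ ^ 3) / 3 :=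
          Finset.sum_le_sum fun r _ => hAM r
      _ = (2 * ∑ r ∈ T, ‖dft A r‖ ^ 3 + ∑ r ∈ T, ‖dft A ((-2) * r)‖ ^ 3) / 3 := by
          rw [← Finset.sum_div, Finset.sum_add_distrib, Finset.mul_sum]
      _ = ∑ r ∈ T, ‖dft A r‖ ^ 3 := by rw [hbij]; ring
  have hfinal : c ^ 3 / 2 ≤ c ^ 3 - (N : ℝ) * c := by nlinarith
  calc c ^ 3 / 2 ≤ c ^ 3 - (N : ℝ) * c := hfinal
    _ ≤ ∑ r ∈ T, ‖dft A r‖ ^ 2 * ‖dft A ((-2) * r)‖ := hnorm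
    _ ≤ ∑ r ∈ T, ‖dft A r‖ ^ 3 := hsum
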